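/- Let n ≥ 1, let S be a stabilizer group of n-qubit signed Pauli matrices, and let ρ_S := 2^{-n} · Σ_{Q ∈ S} Q. Then the average over all signed n-qubit Pauli matrices of the squared trace satisfies: (1/(2·4^n)) · Σ_{(ε,a)} (tr(P_{ε,a} · ρ_S))² = 2^{-n}, where the sum ranges over all pairs (ε,a) with ε ∈ {1,−1} and a : Fin n → Fin 4, and P_{ε,a} := ε • (A_{a(1)} ⊗ ⋯ ⊗ A_{a(n)}) with A₀ = I₂, A₁ = X, A₂ = Y, A₃ = Z. -/

import Mathlib

open Matrix

noncomputable section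

/-- The four single-qubit Pauli matrices: `I₂`, `X`, `Y`, `Z`. -/
def pauli : Fin 4 → Matrix (Fin 2) (Fin 2) ℂ
  | 0 => 1
  | 1 => !![0, 1; 1, 0]
  | 2 => !![0, -Complex.I; Complex.I, 0]
  | 3 => !![1, 0; 0, -1]

/-- The `n`-fold Kronecker product `A_{a 0} ⊗ ⋯ ⊗ A_{a (n-1)}` of single-qubit Pauli
matrices, realized as a matrix indexed by bit strings. -/
def pauliTensor {n : ℕ} (a : Fin n → Fin 4) :
    Matrix (Fin n → Fin 2) (Fin n → Fin 2) ℂ :=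
  fun z w => ∏ i, pauli (a i) (z i) (w i)

/-- A signed `n`-qubit Pauli matrix: `ε • (A₁ ⊗ ⋯ ⊗ Aₙ)` with `ε ∈ {1, -1}`. -/
def IsSignedPauli {n : ℕ} (M : Matrix (Fin n → Fin 2) (Fin n → Fin 2) ℂ) : Prop :=
  ∃ (ε : ℂ) (a : Fin n → Fin 4), (ε = 1 ∨ ε = -1) ∧ M = ε • pauliTensor a

/-- A stabilizer group: a set of signed `n`-qubit Pauli matrices containing the identity,
closed under multiplication, pairwise commuting, not containing `-I`, of size `2^n`. -/
structure IsStabilizerGroup (n : ℕ)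
    (S : Set (Matrix (Fin n → Fin 2) (Fin n → Fin 2) ℂ)) : Prop where
  mem_pauli : ∀ M ∈ S, IsSignedPauli M
  one_mem : (1 : Matrix (Fin n → Fin 2) (Fin n → Fin 2) ℂ) ∈ S
  mul_mem : ∀ M ∈ S, ∀ N ∈ S, M * N ∈ S
  mul_comm : ∀ M ∈ S, ∀ N ∈ S, M * N = N * M
  neg_one_not_mem : -(1 : Matrix (Fin n → Fin 2) (Fin n → Fin 2) ℂ) ∉ S
  card_eq : S.ncard = 2 ^ n

/-- The stabilizer state associated to a stabilizer group: `ρ_S = 2^{-n} Σ_{Q ∈ S} Q`. -/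
def stabState {n : ℕ} (S : Set (Matrix (Fin n → Fin 2) (Fin n → Fin 2) ℂ)) :
    Matrix (Fin n → Fin 2) (Fin n → Fin 2) ℂ :=
  ((2 : ℂ) ^ n)⁻¹ • ∑ᶠ Q ∈ S, Q


lemma pauli_mul_self (c : Fin 4) : pauli c * pauli c = 1 := by
  fin_cases c <;> ext i j <;> fin_cases i <;> fin_cases j <;>
    simp [pauli, Matrix.mul_apply, Fin.sum_univ_two, Matrix.one_apply, Complex.I_mul_I]

lemma trace_pauli_mul (c d : Fin 4) : (pauli c * pauli d).trace = if c = d then 2 else 0 := by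
  fin_cases c <;> fin_cases d <;>
    simp [pauli, Matrix.trace_fin_two, Matrix.mul_apply, Fin.sum_univ_two, Complex.I_mul_I] <;> ring

lemma pauliTensor_mul_apply {n : ℕ} (a b : Fin n → Fin 4) (z w : Fin n → Fin 2) :
    (pauliTensor a * pauliTensor b) z w = ∏ i, (pauli (a i) * pauli (b i)) (z i) (w i) := by
  simp only [Matrix.mul_apply, pauliTensor, ← Finset.prod_mul_distrib]
  symm
  rw [Finset.prod_univ_sum]
  simp

lemma pauliTensor_mul_self {n : ℕ} (a : Fin n → Fin 4) :
    pauliTensor a * pauliTensor a = 1 := by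
  ext z w
  rw [pauliTensor_mul_apply]
  simp only [pauli_mul_self, Matrix.one_apply]
  by_cases h : z = w
  · simp [h]
  · obtain ⟨i, hi⟩ := Function.ne_iff.mp h
    rw [if_neg h]
    exact Finset.prod_eq_zero (Finset.mem_univ i) (by simp [hi])

lemma trace_pauliTensor_mul {n : ℕ} (a b : Fin n → Fin 4) :
    (pauliTensor a * pauliTensor b).trace = if a = b then (2:ℂ) ^ n else 0 := by
  have : (pauliTensor a * pauliTensor b).trace
      = ∏ i, (pauli (a i) * pauli (b i)).trace := by
    simp only [Matrix.trace, Matrix.diag, pauliTensor_mul_apply]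
    symm
    rw [Finset.prod_univ_sum]
    simp
  rw [this]
  simp only [trace_pauli_mul]
  by_cases h : a = b
  · simp [h]
  · obtain ⟨i, hi⟩ := Function.ne_iff.mp h
    rw [if_neg h]
    exact Finset.prod_eq_zero (Finset.mem_univ i) (by simp [hi])

/-- The squared L² norm of the p-concept of a stabilizer state under the uniform distribution
on Pauli measurements: `(1/(2·4^n)) Σ_{(ε,a)} (tr(P_{ε,a} ρ_S))² = 2^{-n}`. -/
theorem stabState_norm_sq {n : ℕ} (hn : 1 ≤ n)
    (S : Set (Matrix (Fin n → Fin 2) (Fin n → Fin 2) ℂ))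
    (hS : IsStabilizerGroup n S) :
    (1 / (2 * 4 ^ n) : ℂ) *
        ∑ ε ∈ ({1, -1} : Finset ℂ), ∑ a : Fin n → Fin 4,
          ((ε • pauliTensor a) * stabState S).trace ^ 2 = ((2 : ℂ) ^ n)⁻¹ := by
  classical
  have h2 : ((2:ℂ)^n) ≠ 0 := pow_ne_zero _ two_ne_zero
  have hfin : S.Finite := by
    apply Set.finite_of_ncard_ne_zero
    rw [hS.card_eq]; positivity
  set T : Finset _ := hfin.toFinset with hT
  have hmemT : ∀ Q, Q ∈ T ↔ Q ∈ S := fun Q => hfin.mem_toFinset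
  have hTcard : T.card = 2 ^ n := by
    rw [← hS.card_eq, Set.ncard_eq_toFinset_card S hfin]
  choose! ε a hsgn hrep using hS.mem_pauli
  have hsq1 : ∀ Q ∈ S, ε Q * ε Q = 1 := by
    intro Q hQ
    rcases hsgn Q hQ with h | h <;> rw [h] <;> ring
  have hinj : ∀ Q ∈ S, ∀ Q' ∈ S, a Q = a Q' → Q = Q' := by
    intro Q hQ Q' hQ' hab
    have hQQ' : Q * Q' = (ε Q * ε Q') • 1 := by
      conv_lhs => rw [hrep Q hQ, hrep Q' hQ', hab]
      rw [smul_mul_smul_comm, pauliTensor_mul_self]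
    have hε : ε Q * ε Q' = 1 ∨ ε Q * ε Q' = -1 := by
      rcases hsgn Q hQ with h | h <;> rcases hsgn Q' hQ' with h' | h' <;>
        rw [h, h'] <;> [left; right; right; left] <;> ring
    rcases hε with hε | hε
    · -- Q * Q' = 1, and Q * Q = 1, so Q' = Q
      rw [hε, one_smul] at hQQ'
      have hQQ : Q * Q = 1 := by
        conv_lhs => rw [hrep Q hQ]
        rw [smul_mul_smul_comm, pauliTensor_mul_self, hsq1 Q hQ, one_smul]
      calc Q = Q * (Q * Q') := by rw [hQQ', mul_one]
        _ = (Q * Q) * Q' := by rw [mul_assoc]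
        _ = Q' := by rw [hQQ, one_mul]
    · exfalso
      apply hS.neg_one_not_mem
      have := hS.mul_mem Q hQ Q' hQ'
      rwa [hQQ', hε, neg_smul, one_smul] at this
  have hstab : stabState S = ((2:ℂ)^n)⁻¹ • ∑ Q ∈ T, Q := by
    rw [stabState, ← hfin.coe_toFinset, finsum_mem_coe_finset]
  have htr : ∀ (b : Fin n → Fin 4), ((pauliTensor b) * stabState S).trace
      = ((2:ℂ)^n)⁻¹ * ∑ Q ∈ T, (ε Q) * (if b = a Q then (2:ℂ)^n else 0) := by
    intro b
    rw [hstab, mul_smul_comm, trace_smul, smul_eq_mul, Finset.mul_sum, trace_sum]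
    congr 1
    apply Finset.sum_congr rfl
    intro Q hQ
    have hQS : Q ∈ S := (hmemT Q).mp hQ
    conv_lhs => rw [hrep Q hQS]
    rw [mul_smul_comm, trace_smul, smul_eq_mul, trace_pauliTensor_mul]
  have key : ∑ b : Fin n → Fin 4, ((pauliTensor b) * stabState S).trace ^ 2
      = (2:ℂ)^n := by
    have hterm : ∀ b : Fin n → Fin 4, ((pauliTensor b) * stabState S).trace ^ 2
        = ((2:ℂ)^n)⁻¹ * ((2:ℂ)^n)⁻¹ * ∑ Q ∈ T, ∑ Q' ∈ T,
            (ε Q * (if b = a Q then (2:ℂ)^n else 0)) *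
            (ε Q' * (if b = a Q' then (2:ℂ)^n else 0)) := by
      intro b
      rw [htr, sq, mul_mul_mul_comm, Finset.sum_mul_sum]
    rw [Finset.sum_congr rfl (fun b _ => hterm b), ← Finset.mul_sum]
    rw [Finset.sum_comm]
    have hswap : ∀ Q ∈ T, ∑ b : Fin n → Fin 4, ∑ Q' ∈ T,
        (ε Q * (if b = a Q then (2:ℂ)^n else 0)) *
        (ε Q' * (if b = a Q' then (2:ℂ)^n else 0))
        = (2:ℂ)^n * (2:ℂ)^n := by
      intro Q hQ
      rw [Finset.sum_comm]
      have hQS : Q ∈ S := (hmemT Q).mp hQ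
      rw [Finset.sum_eq_single Q]
      · -- ∑ b, (ε Q * ite) * (ε Q * ite)
        rw [Finset.sum_eq_single (a Q)]
        · rw [if_pos rfl, mul_mul_mul_comm, hsq1 Q hQS, one_mul]
        · intro b _ hb; simp [hb]
        · intro h; exact absurd (Finset.mem_univ _) h
      · intro Q' hQ' hne
        have hQ'S : Q' ∈ S := (hmemT Q').mp hQ'
        have hane : a Q ≠ a Q' := fun h => hne ((hinj Q' hQ'S Q hQS h.symm))
        apply Finset.sum_eq_zero
        intro b _
        by_cases hb : b = a Q
        · have : b ≠ a Q' := by rw [hb]; exact hane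
          simp [this]
        · simp [hb]
      · intro h; exact absurd hQ h
    rw [Finset.sum_congr rfl hswap, Finset.sum_const, hTcard]
    push_cast
    field_simp
    rw [nsmul_eq_mul, Nat.cast_pow, Nat.cast_ofNat]; ring
  rw [Finset.sum_pair (by norm_num : (1:ℂ) ≠ -1)]
  simp only [one_smul, neg_smul, neg_mul, trace_neg, neg_sq]
  rw [key]
  have h4 : ((4:ℂ))^n = (2:ℂ)^n * (2:ℂ)^n := by
    rw [← mul_pow]; norm_num
  rw [h4]
  field_simp
  ring
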